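/- Let ψ be a diffeomorphism (biholomorphism) of an open subset of 𝔻^{k+1} × 𝔻^m preserving the form ω = i_X μ up to a nonvanishing factor θ, i.e., ψ*ω = θ ω, where X is a vector field on 𝔻^{k+1} viewed on the product and μ = dx₁∧⋯∧dx_{k+1}. Suppose ψ_*(∂/∂y₁) = λ X + Σⱼ λⱼ ∂/∂yⱼ for smooth functions λ, λⱼ. Then ∂θ/∂y₁ · ω = (λ∘ψ)(div(X)∘ψ) θ ω. In particular ∂θ/∂y₁ vanishes at every point where div(X)∘ψ vanishes and ω is nonzero at some nearby direction (more precisely, ∂θ/∂y₁ · ω = 0 there). -/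

import Mathlib

open Function Matrix

noncomputable section

/-- Differential `k`-forms on `ℂ^ι`, as alternating-map-valued functions. -/
abbrev Form (k : ℕ) (ι : Type) : Type :=
  (ι → ℂ) → ((ι → ℂ) [⋀^Fin k]→ₗ[ℂ] ℂ)

/-- Vector fields on `ℂ^ι`. -/
abbrev VF (ι : Type) := (ι → ℂ) → (ι → ℂ)

/-- The standard holomorphic volume form `dx₁ ∧ ⋯ ∧ dxₙ`. -/
def volForm (n : ℕ) : Form n (Fin n) := fun _ => Matrix.detRowAlternating

/-- Interior product (contraction) `i_X ω`. -/
def intProd {k : ℕ} {ι : Type} (X : VF ι) (ω : Form (k + 1) ι) : Form k ι :=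
  fun p => (ω p).curryLeft (X p)

/-- Exterior derivative at a point, as a pointwise multilinear expression. -/
def extDerivAt {k : ℕ} {ι : Type} [Fintype ι] (ω : Form k ι) (p : ι → ℂ)
    (v : Fin (k + 1) → ι → ℂ) : ℂ :=
  ∑ i : Fin (k + 1), (-1 : ℂ) ^ (i : ℕ) *
    fderiv ℂ (fun q => ω q (v ∘ i.succAbove)) p (v i)

/-- Lie derivative of a `k`-form along a vector field, at a point. -/
def lieDerivAt {k : ℕ} {ι : Type} [Fintype ι] (X : VF ι) (ω : Form k ι) (p : ι → ℂ)
    (v : Fin k → ι → ℂ) : ℂ :=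
  fderiv ℂ (fun q => ω q v) p (X p) +
    ∑ i : Fin k, ω p (Function.update v i (fderiv ℂ X p (v i)))

/-- Divergence of a vector field. -/
def divergence {ι : Type} [Fintype ι] [DecidableEq ι] (X : VF ι) (p : ι → ℂ) : ℂ :=
  ∑ i : ι, fderiv ℂ X p (Pi.single i 1) i

/-- The unit polydisc. -/
def polydisc (ι : Type) : Set (ι → ℂ) := {x | ∀ i, ‖x i‖ < 1}

/-- Wedge of a (pointwise) 1-form with a plain `k`-form expression. -/
def wedge1At {k : ℕ} {ι : Type} (α : (ι → ℂ) →L[ℂ] ℂ) (β : (Fin k → ι → ℂ) → ℂ)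
    (v : Fin (k + 1) → ι → ℂ) : ℂ :=
  ∑ i : Fin (k + 1), (-1 : ℂ) ^ (i : ℕ) * α (v i) * β (v ∘ i.succAbove)

/-- Index type for the product `𝔻^n × 𝔻^m`. -/
abbrev PIdx (n m : ℕ) := Sum (Fin n) (Fin m)

/-- The form `dx₁ ∧ ⋯ ∧ dxₙ` pulled back to the product `ℂ^n × ℂ^m`. -/
def volX (n m : ℕ) : Form n (PIdx n m) :=
  fun _ => Matrix.detRowAlternating.compLinearMap (LinearMap.funLeft ℂ ℂ Sum.inl)

/-- `X` depends only on the `x`-coordinates. -/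
def DependsOnlyOnX {n m : ℕ} (X : VF (PIdx n m)) : Prop :=
  ∀ p q : PIdx n m → ℂ, (∀ i, p (Sum.inl i) = q (Sum.inl i)) → X p = X q

/-- `X` has no component in the `y`-directions. -/
def NoYComponent {n m : ℕ} (X : VF (PIdx n m)) : Prop :=
  ∀ (p : PIdx n m → ℂ) (j : Fin m), X p (Sum.inr j) = 0

/-- The coordinate vector field `∂/∂yⱼ` on the product. -/
def dY {n m : ℕ} (j : Fin m) : VF (PIdx n m) := fun _ => Pi.single (Sum.inr j) 1



section AuxLemmas

open Set Metric Real Complex Topology Filter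

/-- Key algebraic identity: sum over rows of determinant with row `t` replaced by
`N.mulVec (M t)` equals `trace N * det M`. -/
lemma det_sum_update {n : ℕ} (M : Fin n → Fin n → ℂ) (N : Matrix (Fin n) (Fin n) ℂ) :
    ∑ t : Fin n, Matrix.detRowAlternating (Function.update M t (N.mulVec (M t)))
      = N.trace * Matrix.detRowAlternating M := by
  have key : ∀ t : Fin n, Matrix.detRowAlternating (Function.update M t (N.mulVec (M t)))
      = ∑ b : Fin n, N.mulVec (M t) b * (Matrix.of M).adjugate b t := by
    intro t
    have h1 : N.mulVec (M t) = ∑ b : Fin n, N.mulVec (M t) b • (Pi.single b 1 : Fin n → ℂ) := by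
      ext a
      simp [Pi.single_apply]
    calc Matrix.detRowAlternating (Function.update M t (N.mulVec (M t)))
        = (Matrix.detRowAlternating (R := ℂ) (n := Fin n)).toMultilinearMap
          (Function.update M t (∑ b : Fin n, N.mulVec (M t) b • (Pi.single b 1 : Fin n → ℂ))) := by
          rw [← h1]; rfl
      _ = ∑ b : Fin n, N.mulVec (M t) b * (Matrix.of M).adjugate b t := by
          rw [MultilinearMap.map_update_sum]
          refine Finset.sum_congr rfl fun b _ => ?_
          rw [MultilinearMap.map_update_smul, Matrix.adjugate_apply]
          rfl
  simp_rw [key]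
  rw [Finset.sum_comm]
  have h2 : ∀ b a : Fin n,
      ∑ t : Fin n, (Matrix.of M).adjugate b t * M t a
        = (Matrix.of M).det * (if b = a then 1 else 0) := by
    intro b a
    have := congrArg (fun P => P b a) ((Matrix.of M).adjugate_mul)
    simpa [Matrix.mul_apply, Matrix.one_apply, Matrix.smul_apply] using this
  calc ∑ b : Fin n, ∑ t : Fin n, N.mulVec (M t) b * (Matrix.of M).adjugate b t
      = ∑ b : Fin n, ∑ a : Fin n, N b a * ((Matrix.of M).det * (if b = a then 1 else 0)) := by
        refine Finset.sum_congr rfl fun b _ => ?_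
        rw [show ∑ t : Fin n, N.mulVec (M t) b * (Matrix.of M).adjugate b t
            = ∑ t : Fin n, ∑ a : Fin n, N b a * ((Matrix.of M).adjugate b t * M t a) from by
          refine Finset.sum_congr rfl fun t _ => ?_
          rw [Matrix.mulVec, dotProduct, Finset.sum_mul]
          refine Finset.sum_congr rfl fun a _ => by ring]
        rw [Finset.sum_comm]
        refine Finset.sum_congr rfl fun a _ => ?_
        rw [← Finset.mul_sum, h2]
    _ = N.trace * Matrix.detRowAlternating M := by
        simp [Finset.sum_ite_eq, Matrix.trace, Matrix.diag, Finset.sum_mul, mul_comm]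
        rfl

lemma line_hasDerivAt {E : Type*} [NormedAddCommGroup E] [NormedSpace ℂ E]
    (p : E) (a : E) (t : ℂ) : HasDerivAt (fun s : ℂ => p + s • a) a t := by
  simpa using ((hasDerivAt_id t).smul_const a).const_add p

/-- Mixed second derivative of a holomorphic map, via the Cauchy integral formula:
if the derivative of `f` in direction `a` equals `Z` on `U`, with `Z` holomorphic, then
`t ↦ (fderiv f (p + t•a)) b` is differentiable with derivative `fderiv Z p b`. -/
lemma mixed_deriv {E F : Type*} [NormedAddCommGroup E] [NormedSpace ℂ E]
    [NormedAddCommGroup F] [NormedSpace ℂ F] [CompleteSpace F]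
    {f : E → F} {U : Set E} (hU : IsOpen U) (hf : DifferentiableOn ℂ f U)
    {p : E} (hp : p ∈ U) (a b : E) {Z : E → F} (hZ : DifferentiableOn ℂ Z U)
    (hfZ : ∀ q ∈ U, fderiv ℂ f q a = Z q) :
    HasDerivAt (fun t : ℂ => fderiv ℂ f (p + t • a) b) (fderiv ℂ Z p b) 0 := by
  classical
  -- choose a bi-disc around `p` inside `U`
  have hcont : Continuous fun ts : ℂ × ℂ => p + ts.1 • a + ts.2 • b := by
    apply Continuous.add
    · exact continuous_const.add ((continuous_fst).smul continuous_const)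
    · exact (continuous_snd).smul continuous_const
  have h0 : (fun ts : ℂ × ℂ => p + ts.1 • a + ts.2 • b) ⁻¹' U ∈ 𝓝 ((0, 0) : ℂ × ℂ) := by
    apply hcont.continuousAt.preimage_mem_nhds
    simpa using hU.mem_nhds hp
  obtain ⟨ε, hε, hball⟩ := Metric.mem_nhds_iff.1 h0
  set r := ε / 2 with hrdef
  have hr : 0 < r := half_pos hε
  have hsub : ∀ t s : ℂ, ‖t‖ ≤ r → ‖s‖ ≤ r → p + t • a + s • b ∈ U := by
    intro t s ht hs
    have hm : ((t, s) : ℂ × ℂ) ∈ ball ((0, 0) : ℂ × ℂ) ε := by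
      rw [mem_ball, Prod.dist_eq]
      have h1 : dist t 0 ≤ r := by simpa [dist_zero_right] using ht
      have h2 : dist s 0 ≤ r := by simpa [dist_zero_right] using hs
      have : max (dist t 0) (dist s 0) ≤ r := max_le h1 h2
      calc max (dist t 0) (dist s 0) ≤ r := this
        _ < ε := by rw [hrdef]; linarith
    exact hball hm
  have hnorm_cm : ∀ θ : ℝ, ‖circleMap 0 r θ‖ = r := by
    intro θ
    rw [norm_circleMap_zero, abs_of_pos hr]
  have hne : ∀ θ : ℝ, circleMap 0 r θ ≠ 0 := fun θ => by
    intro h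
    have := hnorm_cm θ
    rw [h, norm_zero] at this
    exact hr.ne this
  -- bound for Z on a compact set
  obtain ⟨C, hC⟩ : ∃ C, ∀ x ∈ (fun ts : ℂ × ℂ => p + ts.1 • a + ts.2 • b) ''
      (closedBall 0 r ×ˢ closedBall 0 r), ‖Z x‖ ≤ C := by
    have hK : IsCompact ((fun ts : ℂ × ℂ => p + ts.1 • a + ts.2 • b) ''
        (closedBall 0 r ×ˢ closedBall 0 r)) :=
      ((isCompact_closedBall _ _).prod (isCompact_closedBall _ _)).image hcont
    refine hK.exists_bound_of_continuousOn (hZ.continuousOn.mono ?_)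
    rintro x ⟨⟨t, s⟩, ⟨ht, hs⟩, rfl⟩
    exact hsub t s (by simpa [dist_zero_right] using mem_closedBall.1 ht)
      (by simpa [dist_zero_right] using mem_closedBall.1 hs)
  set Fn : ℂ → ℝ → F := fun t θ =>
    deriv (circleMap 0 r) θ • (circleMap 0 r θ ^ 2)⁻¹ • f (p + t • a + circleMap 0 r θ • b)
    with hFn
  set Fn' : ℂ → ℝ → F := fun t θ =>
    deriv (circleMap 0 r) θ • (circleMap 0 r θ ^ 2)⁻¹ • Z (p + t • a + circleMap 0 r θ • b)
    with hFn'
  -- Step A : Cauchy representation of the derivative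
  have stepA : ∀ t : ℂ, ‖t‖ ≤ r → fderiv ℂ f (p + t • a) b
      = (2 * π * I : ℂ)⁻¹ • ∮ z in C(0, r), (z ^ 2)⁻¹ • f (p + t • a + z • b) := by
    intro t ht
    have hVo : IsOpen {s : ℂ | p + t • a + s • b ∈ U} :=
      hU.preimage (by exact continuous_const.add (continuous_id.smul continuous_const))
    have hVs : closedBall (0 : ℂ) r ⊆ {s : ℂ | p + t • a + s • b ∈ U} := by
      intro s hs
      exact hsub t s ht (by simpa [dist_zero_right] using mem_closedBall.1 hs)
    have hg : DifferentiableOn ℂ (fun s : ℂ => f (p + t • a + s • b))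
        {s : ℂ | p + t • a + s • b ∈ U} := by
      intro s hs
      have h1 : DifferentiableAt ℂ f (p + t • a + s • b) := hf.differentiableAt (hU.mem_nhds hs)
      have h2 : DifferentiableAt ℂ (fun s : ℂ => p + t • a + s • b) s :=
        (differentiableAt_id.smul_const b).const_add _
      exact (h1.comp s h2).differentiableWithinAt
    have hcauchy := Complex.two_pi_I_inv_smul_circleIntegral_sub_sq_inv_smul_of_differentiable
      hVo hVs hg (mem_ball_self hr)
    have h00 : p + t • a + (0 : ℂ) • b = p + t • a := by simp
    have hdf : DifferentiableAt ℂ f (p + t • a + (0 : ℂ) • b) := by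
      rw [h00]
      exact hf.differentiableAt (hU.mem_nhds (by simpa using hsub t 0 ht (by simp [hr.le])))
    have hline : HasDerivAt (fun s : ℂ => p + t • a + s • b) b 0 := by
      simpa using ((hasDerivAt_id (0 : ℂ)).smul_const b).const_add (p + t • a)
    have hfd : HasDerivAt (fun s : ℂ => f (p + t • a + s • b))
        (fderiv ℂ f (p + t • a) b) 0 := by
      have := hdf.hasFDerivAt.comp_hasDerivAt 0 hline
      rwa [h00] at this
    rw [show (∮ z in C(0, r), (z ^ 2)⁻¹ • f (p + t • a + z • b))
        = ∮ z in C(0, r), ((z - 0) ^ 2)⁻¹ • f (p + t • a + z • b) from by simp, hcauchy]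
    exact hfd.deriv.symm
  -- continuity helpers
  have hcm : Continuous (circleMap 0 r) := continuous_circleMap 0 r
  have hder : Continuous fun θ => deriv (circleMap 0 r) θ := by
    simp_rw [deriv_circleMap]
    exact hcm.mul continuous_const
  have hinv : Continuous fun θ => (circleMap 0 r θ ^ 2)⁻¹ :=
    (hcm.pow 2).inv₀ fun θ => pow_ne_zero 2 (hne θ)
  have hmemU : ∀ (t : ℂ), ‖t‖ ≤ r → ∀ θ : ℝ, p + t • a + circleMap 0 r θ • b ∈ U := by
    intro t ht θ
    exact hsub t _ ht (le_of_eq (hnorm_cm θ))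
  have hptcont : ∀ t : ℂ, Continuous fun θ : ℝ => p + t • a + circleMap 0 r θ • b := by
    intro t
    exact continuous_const.add (hcm.smul continuous_const)
  have hFnCont : ∀ (t : ℂ), ‖t‖ ≤ r → Continuous (Fn t) := by
    intro t ht
    refine hder.smul (hinv.smul ?_)
    exact hf.continuousOn.comp_continuous (hptcont t) (hmemU t ht)
  have hFn'Cont : ∀ (t : ℂ), ‖t‖ ≤ r → Continuous (Fn' t) := by
    intro t ht
    refine hder.smul (hinv.smul ?_)
    exact hZ.continuousOn.comp_continuous (hptcont t) (hmemU t ht)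
  -- Step B : differentiation under the integral sign
  have stepB : HasDerivAt (fun t : ℂ => ∫ θ in (0:ℝ)..(2 * π), Fn t θ)
      (∫ θ in (0:ℝ)..(2 * π), Fn' 0 θ) 0 := by
    refine (intervalIntegral.hasDerivAt_integral_of_dominated_loc_of_deriv_le
      (F := Fn) (F' := Fn') (x₀ := (0:ℂ)) (a := (0:ℝ)) (b := 2 * π)
      (μ := MeasureTheory.volume) (bound := fun _ => r * ((r ^ 2)⁻¹ * C)) (Metric.ball_mem_nhds (0:ℂ) hr)
      ?_ ?_ ?_ ?_ ?_ ?_).2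
    · -- measurability of Fn t for t near 0
      filter_upwards [Metric.ball_mem_nhds (0:ℂ) hr] with t htb
      have ht : ‖t‖ ≤ r := by
        have := mem_ball.1 htb; rw [dist_zero_right] at this; exact this.le
      exact ((hFnCont t ht).aestronglyMeasurable).restrict
    · exact ((hFnCont 0 (by simp [hr.le])).intervalIntegrable _ _)
    · exact ((hFn'Cont 0 (by simp [hr.le])).aestronglyMeasurable).restrict
    · refine Filter.Eventually.of_forall fun θ hθ t htb => ?_
      have ht : ‖t‖ ≤ r := by
        have := mem_ball.1 htb; rw [dist_zero_right] at this; exact this.le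
      have hnormZ : ‖Z (p + t • a + circleMap 0 r θ • b)‖ ≤ C := by
        refine hC _ ⟨(t, circleMap 0 r θ), ⟨?_, ?_⟩, rfl⟩
        · simpa [dist_zero_right] using ht
        · simpa [dist_zero_right] using le_of_eq (hnorm_cm θ)
      have h1 : ‖deriv (circleMap 0 r) θ‖ = r := by
        rw [deriv_circleMap, norm_mul, Complex.norm_I, mul_one,
          hnorm_cm θ]
      have h2 : ‖(circleMap 0 r θ ^ 2)⁻¹‖ = (r ^ 2)⁻¹ := by
        rw [norm_inv, norm_pow, hnorm_cm θ]
      calc ‖Fn' t θ‖ = ‖deriv (circleMap 0 r) θ‖ * (‖(circleMap 0 r θ ^ 2)⁻¹‖ *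
            ‖Z (p + t • a + circleMap 0 r θ • b)‖) := by
            rw [hFn']; rw [norm_smul, norm_smul]
        _ ≤ r * ((r ^ 2)⁻¹ * C) := by
            rw [h1, h2]
            have h3 : (0:ℝ) ≤ (r ^ 2)⁻¹ := by positivity
            exact mul_le_mul_of_nonneg_left
              (mul_le_mul_of_nonneg_left hnormZ h3) hr.le
    · exact intervalIntegrable_const
    · refine Filter.Eventually.of_forall fun θ hθ t htb => ?_
      have ht : ‖t‖ ≤ r := by
        have := mem_ball.1 htb; rw [dist_zero_right] at this; exact this.le
      have hmem : p + t • a + circleMap 0 r θ • b ∈ U := hmemU t ht θ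
      have hline : HasDerivAt (fun t : ℂ => p + t • a + circleMap 0 r θ • b) a t := by
        have h1 : HasDerivAt (fun t : ℂ => p + t • a) a t := line_hasDerivAt p a t
        simpa using h1.add_const (circleMap 0 r θ • b)
      have hdf : DifferentiableAt ℂ f (p + t • a + circleMap 0 r θ • b) :=
        hf.differentiableAt (hU.mem_nhds hmem)
      have hinner : HasDerivAt (fun t : ℂ => f (p + t • a + circleMap 0 r θ • b))
          (Z (p + t • a + circleMap 0 r θ • b)) t := by
        have := hdf.hasFDerivAt.comp_hasDerivAt t hline
        rwa [hfZ _ hmem] at this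
      exact (hinner.const_smul ((circleMap 0 r θ ^ 2)⁻¹)).const_smul
        (deriv (circleMap 0 r) θ)
  -- Step C : identification of the limit integral
  have stepC : (2 * π * I : ℂ)⁻¹ • (∫ θ in (0:ℝ)..(2 * π), Fn' 0 θ) = fderiv ℂ Z p b := by
    have hcirc : (∫ θ in (0:ℝ)..(2 * π), Fn' 0 θ)
        = ∮ z in C(0, r), ((z - 0) ^ 2)⁻¹ • Z (p + z • b) := by
      rw [circleIntegral]
      refine intervalIntegral.integral_congr fun θ _ => ?_
      rw [hFn']
      norm_num
    have hVo : IsOpen {s : ℂ | p + s • b ∈ U} :=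
      hU.preimage (continuous_const.add (continuous_id.smul continuous_const))
    have hVs : closedBall (0 : ℂ) r ⊆ {s : ℂ | p + s • b ∈ U} := by
      intro s hs
      have := hsub 0 s (by simp [hr.le]) (by simpa [dist_zero_right] using mem_closedBall.1 hs)
      simpa using this
    have hg : DifferentiableOn ℂ (fun s : ℂ => Z (p + s • b)) {s : ℂ | p + s • b ∈ U} := by
      intro s hs
      have h1 : DifferentiableAt ℂ Z (p + s • b) := hZ.differentiableAt (hU.mem_nhds hs)
      exact (h1.comp s ((differentiableAt_id.smul_const b).const_add p)).differentiableWithinAt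
    have hcauchy := Complex.two_pi_I_inv_smul_circleIntegral_sub_sq_inv_smul_of_differentiable
      hVo hVs hg (mem_ball_self hr)
    have hdZ : DifferentiableAt ℂ Z (p + (0 : ℂ) • b) := by
      simpa using hZ.differentiableAt (hU.mem_nhds hp)
    have hfd : HasDerivAt (fun s : ℂ => Z (p + s • b)) (fderiv ℂ Z p b) 0 := by
      have := hdZ.hasFDerivAt.comp_hasDerivAt 0 (line_hasDerivAt p b 0)
      simpa [Function.comp_def] using this
    rw [hcirc, hcauchy]
    exact hfd.deriv
  -- conclusion
  have hEv : (fun t : ℂ => fderiv ℂ f (p + t • a) b)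
      =ᶠ[nhds (0:ℂ)] fun t => (2 * π * I : ℂ)⁻¹ • ∫ θ in (0:ℝ)..(2 * π), Fn t θ := by
    filter_upwards [Metric.ball_mem_nhds (0:ℂ) hr] with t htb
    have ht : ‖t‖ ≤ r := by
      have := mem_ball.1 htb; rw [dist_zero_right] at this; exact this.le
    rw [stepA t ht]
    rfl
  have final := (stepB.const_smul ((2 * π * I : ℂ)⁻¹)).congr_of_eventuallyEq hEv
  rwa [stepC] at final


/-- If `f` is constant along direction `a`, its `fderiv` in direction `a` vanishes. -/
lemma fderiv_dir_eq_zero {E F : Type*} [NormedAddCommGroup E] [NormedSpace ℂ E]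
    [NormedAddCommGroup F] [NormedSpace ℂ F]
    {f : E → F} {p : E} (hd : DifferentiableAt ℂ f p) (a : E)
    (hconst : ∀ t : ℂ, f (p + t • a) = f p) : fderiv ℂ f p a = 0 := by
  have h1 : HasDerivAt (fun t : ℂ => f (p + t • a)) (fderiv ℂ f p a) 0 := by
    have h00 : p + (0:ℂ) • a = p := by simp
    have hd' : HasFDerivAt f (fderiv ℂ f p) (p + (0:ℂ) • a) := by rw [h00]; exact hd.hasFDerivAt
    exact hd'.comp_hasDerivAt 0 (line_hasDerivAt p a 0)
  have h2 : HasDerivAt (fun _ : ℂ => f p) (fderiv ℂ f p a) 0 := by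
    refine h1.congr_of_eventuallyEq ?_
    exact Filter.Eventually.of_forall fun t => (hconst t).symm
  exact ((hasDerivAt_const (0:ℂ) (f p)).unique h2).symm

lemma isOpen_polydisc {ι : Type} [Fintype ι] : IsOpen (polydisc ι) := by
  have : polydisc ι = Set.pi Set.univ (fun _ : ι => Metric.ball (0:ℂ) 1) := by
    ext x
    simp [polydisc, Metric.mem_ball, dist_zero_right]
  rw [this]
  exact isOpen_set_pi Set.finite_univ fun i _ => Metric.isOpen_ball

/-- The determinant-in-the-`x`-rows form, bounded. -/
lemma volX_bound {n m : ℕ} (w : Fin n → (PIdx n m → ℂ)) :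
    ‖Matrix.detRowAlternating (R := ℂ) (fun i => w i ∘ Sum.inl)‖
      ≤ (n.factorial : ℝ) * ∏ i, ‖w i‖ := by
  rw [show Matrix.detRowAlternating (R := ℂ) (fun i => w i ∘ Sum.inl)
      = (Matrix.of fun i => w i ∘ Sum.inl).det from rfl]
  rw [Matrix.det_apply]
  refine (norm_sum_le _ _).trans ?_
  have hterm : ∀ σ : Equiv.Perm (Fin n),
      ‖Equiv.Perm.sign σ • ∏ i, (Matrix.of fun i => w i ∘ Sum.inl) (σ i) i‖
        ≤ ∏ i, ‖w i‖ := by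
    intro σ
    have h1 : ‖Equiv.Perm.sign σ • ∏ i, (Matrix.of fun i => w i ∘ Sum.inl) (σ i) i‖
        = ‖∏ i, (Matrix.of fun i => w i ∘ Sum.inl) (σ i) i‖ := by
      rcases Int.units_eq_one_or (Equiv.Perm.sign σ) with h | h <;>
        simp [h, Units.smul_def]
    rw [h1]
    rw [norm_prod]
    calc ∏ i, ‖(Matrix.of fun i => w i ∘ Sum.inl) (σ i) i‖
        ≤ ∏ i, ‖w (σ i)‖ := by
          refine Finset.prod_le_prod (fun i _ => norm_nonneg _) fun i _ => ?_
          exact norm_le_pi_norm (w (σ i)) (Sum.inl i)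
      _ = ∏ i, ‖w i‖ := Equiv.prod_comp σ fun i => ‖w i‖
  refine (Finset.sum_le_sum fun σ _ => hterm σ).trans ?_
  rw [Finset.sum_const, Finset.card_univ, Fintype.card_perm, nsmul_eq_mul,
    Fintype.card_fin]

/-- The determinant form `volX` as a continuous multilinear map. -/
def Ac (n m : ℕ) : ContinuousMultilinearMap ℂ (fun _ : Fin n => (PIdx n m → ℂ)) ℂ :=
  MultilinearMap.mkContinuous (volX n m 0).toMultilinearMap (n.factorial : ℝ)
    (fun w => by
      have := volX_bound (m := m) w
      exact this)

lemma Ac_apply {n m : ℕ} (w : Fin n → (PIdx n m → ℂ)) (q : PIdx n m → ℂ) :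
    Ac n m w = volX n m q w := rfl

lemma intProd_volX_eq {k m : ℕ} (X : VF (PIdx (k + 1) m)) (q : PIdx (k + 1) m → ℂ)
    (u : Fin k → (PIdx (k + 1) m → ℂ)) :
    intProd X (volX (k + 1) m) q u = Ac (k + 1) m (Fin.cons (X q) u) := rfl

lemma Ac_update_single_inr {n m : ℕ} (w : Fin n → (PIdx n m → ℂ)) (i : Fin n) (j : Fin m) :
    Ac n m (Function.update w i (Pi.single (Sum.inr j) 1)) = 0 := by
  show (Matrix.of fun l => Function.update w i
    (Pi.single (Sum.inr j) (1 : ℂ)) l ∘ Sum.inl).det = 0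
  refine Matrix.det_eq_zero_of_row_eq_zero i fun a => ?_
  show (Function.update w i (Pi.single (Sum.inr j) (1 : ℂ)) i) (Sum.inl a) = 0
  rw [Function.update_self]
  exact Pi.single_eq_of_ne (Sum.inl_ne_inr) _

lemma Ac_update_repeat {n m : ℕ} (w : Fin (n + 1) → (PIdx (n + 1) m → ℂ)) (i : Fin n) :
    Ac (n + 1) m (Function.update w i.succ (w 0)) = 0 := by
  have h : Ac (n + 1) m (Function.update w i.succ (w 0))
      = volX (n + 1) m 0 (Function.update w i.succ (w 0)) := rfl
  rw [h]
  refine AlternatingMap.map_eq_zero_of_eq _ _ (i := (0 : Fin (n + 1))) (j := i.succ) ?_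
    (Fin.succ_ne_zero i).symm
  rw [Function.update_of_ne (Fin.succ_ne_zero i).symm, Function.update_self]


end AuxLemmas

/-- If a biholomorphism `ψ` of an open subset of `𝔻^{k+1} × 𝔻^m` satisfies
`ψ*ω = θ·ω` where `ω = i_X μ`, and `ψ_*(∂/∂y₁) = λ X + Σⱼ λⱼ ∂/∂yⱼ`, then
`(∂θ/∂y₁)·ω = (λ∘ψ)(div X ∘ ψ)·θ·ω`; in particular `(∂θ/∂y₁)·ω = 0` wherever
`div X ∘ ψ` vanishes. -/
theorem stmt4 {k m : ℕ} (U : Set (PIdx (k + 1) m → ℂ)) (hU : IsOpen U)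
    (hUsub : U ⊆ polydisc (PIdx (k + 1) m))
    (X : VF (PIdx (k + 1) m)) (hXx : DependsOnlyOnX X) (hXv : NoYComponent X)
    (hX : DifferentiableOn ℂ X (polydisc (PIdx (k + 1) m)))
    (ψ : (PIdx (k + 1) m → ℂ) → (PIdx (k + 1) m → ℂ))
    (hψ : DifferentiableOn ℂ ψ U) (hψin : ∀ p ∈ U, ψ p ∈ polydisc (PIdx (k + 1) m))
    (θ : (PIdx (k + 1) m → ℂ) → ℂ) (hθ : DifferentiableOn ℂ θ U)
    (hθne : ∀ p ∈ U, θ p ≠ 0)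
    (lam : (PIdx (k + 1) m → ℂ) → ℂ) (lams : Fin m → (PIdx (k + 1) m → ℂ) → ℂ)
    (hlam : DifferentiableOn ℂ lam (polydisc (PIdx (k + 1) m)))
    (hlams : ∀ j, DifferentiableOn ℂ (lams j) (polydisc (PIdx (k + 1) m)))
    -- `ψ* ω = θ ω` where `ω = i_X μ`:
    (hpull : ∀ p ∈ U, ∀ v : Fin k → PIdx (k + 1) m → ℂ,
      intProd X (volX (k + 1) m) (ψ p) (fun i => fderiv ℂ ψ p (v i))
        = θ p * intProd X (volX (k + 1) m) p v)
    (j1 : Fin m)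
    -- `ψ_*(∂/∂y₁) = λ X + Σⱼ λⱼ ∂/∂yⱼ`:
    (hpush : ∀ p ∈ U, fderiv ℂ ψ p (Pi.single (Sum.inr j1) 1)
      = lam (ψ p) • X (ψ p) + ∑ j : Fin m, lams j (ψ p) • (Pi.single (Sum.inr j) 1 : PIdx (k + 1) m → ℂ)) :
    (∀ p ∈ U, ∀ v : Fin k → PIdx (k + 1) m → ℂ,
        fderiv ℂ θ p (Pi.single (Sum.inr j1) 1) * intProd X (volX (k + 1) m) p v
          = lam (ψ p) * divergence X (ψ p) * (θ p * intProd X (volX (k + 1) m) p v)) ∧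
    (∀ p ∈ U, divergence X (ψ p) = 0 →
      ∀ v : Fin k → PIdx (k + 1) m → ℂ,
        fderiv ℂ θ p (Pi.single (Sum.inr j1) 1) * intProd X (volX (k + 1) m) p v = 0) := by
  classical
  have main : ∀ p ∈ U, ∀ v : Fin k → PIdx (k + 1) m → ℂ,
      fderiv ℂ θ p (Pi.single (Sum.inr j1) 1) * intProd X (volX (k + 1) m) p v
        = lam (ψ p) * divergence X (ψ p) * (θ p * intProd X (volX (k + 1) m) p v) := by
    intro p hp v
    set e : PIdx (k + 1) m → ℂ := Pi.single (Sum.inr j1) 1 with he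
    -- basic differentiability
    have hψp : DifferentiableAt ℂ ψ p := hψ.differentiableAt (hU.mem_nhds hp)
    have hψppoly : ψ p ∈ polydisc (PIdx (k + 1) m) := hψin p hp
    have hXψp : DifferentiableAt ℂ X (ψ p) :=
      hX.differentiableAt (isOpen_polydisc.mem_nhds hψppoly)
    have hθp : DifferentiableAt ℂ θ p := hθ.differentiableAt (hU.mem_nhds hp)
    -- the vector field Z₀ = λ X + Σ λⱼ ∂/∂yⱼ on the polydisc
    set Z0 : (PIdx (k + 1) m → ℂ) → (PIdx (k + 1) m → ℂ) := fun y =>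
      lam y • X y + ∑ j : Fin m, lams j y • (Pi.single (Sum.inr j) 1 : PIdx (k + 1) m → ℂ)
      with hZ0
    have hZ0d : DifferentiableOn ℂ Z0 (polydisc (PIdx (k + 1) m)) := by
      refine DifferentiableOn.add (hlam.smul hX) ?_
      refine DifferentiableOn.fun_sum fun j _ => ?_
      exact (hlams j).smul_const _
    set ZΨ : (PIdx (k + 1) m → ℂ) → (PIdx (k + 1) m → ℂ) := fun q => Z0 (ψ q) with hZΨ
    have hZΨd : DifferentiableOn ℂ ZΨ U := hZ0d.comp hψ fun q hq => hψin q hq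
    have hfZ : ∀ q ∈ U, fderiv ℂ ψ q e = ZΨ q := fun q hq => hpush q hq
    -- the line in the y₁ direction
    set γ : ℂ → (PIdx (k + 1) m → ℂ) := fun t => p + t • e with hγ
    have hγ0 : γ 0 = p := by simp [hγ]
    have hXγ : ∀ t : ℂ, X (γ t) = X p := by
      intro t
      refine hXx _ _ fun i => ?_
      show p (Sum.inl i) + t * e (Sum.inl i) = p (Sum.inl i)
      rw [he, Pi.single_eq_of_ne (Sum.inl_ne_inr), mul_zero, add_zero]
    -- derivative of X in the y-directions vanishes
    have hXdir : ∀ q ∈ polydisc (PIdx (k + 1) m), ∀ j : Fin m,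
        fderiv ℂ X q (Pi.single (Sum.inr j) 1) = 0 := by
      intro q hq j
      refine fderiv_dir_eq_zero (hX.differentiableAt (isOpen_polydisc.mem_nhds hq)) _
        fun t => ?_
      refine hXx _ _ fun i => ?_
      show q (Sum.inl i) + t * (Pi.single (Sum.inr j) 1 : PIdx (k + 1) m → ℂ) (Sum.inl i)
        = q (Sum.inl i)
      rw [Pi.single_eq_of_ne (Sum.inl_ne_inr), mul_zero, add_zero]
    set B : (PIdx (k + 1) m → ℂ) →L[ℂ] (PIdx (k + 1) m → ℂ) := fderiv ℂ X (ψ p) with hB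
    set w : Fin (k + 1) → (PIdx (k + 1) m → ℂ) :=
      Fin.cons (X (ψ p)) (fun i => fderiv ℂ ψ p (v i)) with hw
    -- derivative of component 0
    have hΦd : HasDerivAt (fun t => ψ (γ t)) (fderiv ℂ ψ p e) 0 := by
      have h00 : p + (0 : ℂ) • e = p := by simp
      have hψ' : HasFDerivAt ψ (fderiv ℂ ψ p) (p + (0 : ℂ) • e) := by
        rw [h00]; exact hψp.hasFDerivAt
      exact hψ'.comp_hasDerivAt 0 (line_hasDerivAt p e 0)
    have hBZ : fderiv ℂ X (ψ p) (fderiv ℂ ψ p e) = lam (ψ p) • B (X (ψ p)) := by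
      rw [hfZ p hp]
      show B (lam (ψ p) • X (ψ p)
        + ∑ j : Fin m, lams j (ψ p) • (Pi.single (Sum.inr j) 1 : PIdx (k + 1) m → ℂ))
        = lam (ψ p) • B (X (ψ p))
      rw [map_add, _root_.map_smul, map_sum]
      have : ∀ j : Fin m,
          B (lams j (ψ p) • (Pi.single (Sum.inr j) 1 : PIdx (k + 1) m → ℂ)) = 0 := by
        intro j
        rw [_root_.map_smul, hB, hXdir (ψ p) hψppoly j, smul_zero]
      rw [Finset.sum_congr rfl fun j _ => this j]
      simp
    have hD0 : HasDerivAt (fun t => X (ψ (γ t))) (lam (ψ p) • B (X (ψ p))) 0 := by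
      have hX' : HasFDerivAt X (fderiv ℂ X (ψ p)) (ψ (γ 0)) := by
        rw [hγ0]; exact hXψp.hasFDerivAt
      have := hX'.comp_hasDerivAt 0 hΦd
      rwa [hBZ] at this
    -- derivative of the other components, via the Cauchy-integral mixed-derivative lemma
    have hDi : ∀ i : Fin k, HasDerivAt (fun t => fderiv ℂ ψ (γ t) (v i))
        (fderiv ℂ ZΨ p (v i)) 0 := fun i =>
      mixed_deriv hU hψ hp e (v i) hZΨd hfZ
    -- the moving frame and its derivative
    set W : ℂ → Fin (k + 1) → (PIdx (k + 1) m → ℂ) := fun t =>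
      Fin.cons (X (ψ (γ t))) (fun i => fderiv ℂ ψ (γ t) (v i)) with hW
    set W' : Fin (k + 1) → (PIdx (k + 1) m → ℂ) :=
      Fin.cons (lam (ψ p) • B (X (ψ p))) (fun i => fderiv ℂ ZΨ p (v i)) with hW'
    have hWd : HasDerivAt W W' 0 := by
      rw [hasDerivAt_pi]
      intro j
      refine Fin.cases ?_ (fun i => ?_) j
      · simpa [hW, hW'] using hD0
      · simpa [hW, hW'] using hDi i
    have hW0 : W 0 = w := by
      show Fin.cons (X (ψ (γ 0))) (fun i => fderiv ℂ ψ (γ 0) (v i)) = w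
      rw [hγ0, hw]
    -- derivative of the contracted form along the line
    have hAcd : HasDerivAt (fun t => Ac (k + 1) m (W t))
        (∑ j : Fin (k + 1), Ac (k + 1) m (Function.update w j (W' j))) 0 := by
      have h1 := ((Ac (k + 1) m).hasFDerivAt (x := W 0)).comp_hasDerivAt 0 hWd
      rw [hW0] at h1
      have h2 : ((Ac (k + 1) m).linearDeriv w) W'
          = ∑ j : Fin (k + 1), Ac (k + 1) m (Function.update w j (W' j)) := by
        rw [ContinuousMultilinearMap.linearDeriv_apply]
      rwa [h2] at h1
    set c0 : ℂ := intProd X (volX (k + 1) m) p v with hc0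
    -- the two sides agree near 0
    have hEq : (fun t => Ac (k + 1) m (W t)) =ᶠ[nhds (0 : ℂ)] fun t => θ (γ t) * c0 := by
      have hγcont : Continuous γ := by
        rw [hγ]; exact continuous_const.add (continuous_id.smul continuous_const)
      have hmem : γ ⁻¹' U ∈ nhds (0 : ℂ) :=
        hγcont.continuousAt.preimage_mem_nhds (by rw [hγ0]; exact hU.mem_nhds hp)
      filter_upwards [hmem] with t ht
      calc Ac (k + 1) m (W t)
          = intProd X (volX (k + 1) m) (ψ (γ t)) (fun i => fderiv ℂ ψ (γ t) (v i)) := rfl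
        _ = θ (γ t) * intProd X (volX (k + 1) m) (γ t) v := hpull (γ t) ht v
        _ = θ (γ t) * c0 := by
            rw [hc0, intProd_volX_eq X (γ t) v, intProd_volX_eq X p v, hXγ t]
    -- derivative of the right-hand side
    have hRd : HasDerivAt (fun t => θ (γ t) * c0) (fderiv ℂ θ p e * c0) 0 := by
      have h00 : p + (0 : ℂ) • e = p := by simp
      have hθ' : HasFDerivAt θ (fderiv ℂ θ p) (p + (0 : ℂ) • e) := by
        rw [h00]; exact hθp.hasFDerivAt
      exact (hθ'.comp_hasDerivAt 0 (line_hasDerivAt p e 0)).mul_const c0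
    -- uniqueness of the derivative
    have hkeyEq : (∑ j : Fin (k + 1), Ac (k + 1) m (Function.update w j (W' j)))
        = fderiv ℂ θ p e * c0 :=
      (hAcd.congr_of_eventuallyEq hEq.symm).unique hRd
    -- slot-by-slot evaluation of the sum of updates
    have hw0v : w 0 = X (ψ p) := by rw [hw]; simp
    have hwsucc : ∀ i : Fin k, w i.succ = fderiv ℂ ψ p (v i) := fun i => by rw [hw]; simp
    have hlamp : DifferentiableAt ℂ lam (ψ p) :=
      hlam.differentiableAt (isOpen_polydisc.mem_nhds hψppoly)
    have hlamsp : ∀ j : Fin m, DifferentiableAt ℂ (lams j) (ψ p) := fun j =>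
      (hlams j).differentiableAt (isOpen_polydisc.mem_nhds hψppoly)
    have hZΨfd : ∀ i : Fin k, fderiv ℂ ZΨ p (v i)
        = fderiv ℂ lam (ψ p) (w i.succ) • X (ψ p) + lam (ψ p) • B (w i.succ)
          + ∑ j : Fin m, fderiv ℂ (lams j) (ψ p) (w i.succ) •
              (Pi.single (Sum.inr j) 1 : PIdx (k + 1) m → ℂ) := by
      intro i
      have hZ0p : DifferentiableAt ℂ Z0 (ψ p) :=
        hZ0d.differentiableAt (isOpen_polydisc.mem_nhds hψppoly)
      have hcomp : fderiv ℂ ZΨ p = (fderiv ℂ Z0 (ψ p)).comp (fderiv ℂ ψ p) :=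
        fderiv_comp p hZ0p hψp
      have h1 : fderiv ℂ (fun y => lam y • X y) (ψ p)
          = lam (ψ p) • fderiv ℂ X (ψ p) + (fderiv ℂ lam (ψ p)).smulRight (X (ψ p)) :=
        fderiv_smul hlamp hXψp
      have h2 : fderiv ℂ (fun y => ∑ j : Fin m, lams j y •
            (Pi.single (Sum.inr j) 1 : PIdx (k + 1) m → ℂ)) (ψ p)
          = ∑ j : Fin m, (fderiv ℂ (lams j) (ψ p)).smulRight
              (Pi.single (Sum.inr j) 1 : PIdx (k + 1) m → ℂ) := by
        rw [fderiv_fun_sum fun j _ => (hlamsp j).smul_const _]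
        exact Finset.sum_congr rfl fun j _ => fderiv_smul_const (hlamsp j) _
      have h3 : fderiv ℂ Z0 (ψ p)
          = lam (ψ p) • fderiv ℂ X (ψ p) + (fderiv ℂ lam (ψ p)).smulRight (X (ψ p))
            + ∑ j : Fin m, (fderiv ℂ (lams j) (ψ p)).smulRight
                (Pi.single (Sum.inr j) 1 : PIdx (k + 1) m → ℂ) := by
        have hd1 : DifferentiableAt ℂ (fun y => lam y • X y) (ψ p) := hlamp.smul hXψp
        have hd2 : DifferentiableAt ℂ (fun y => ∑ j : Fin m, lams j y •
            (Pi.single (Sum.inr j) 1 : PIdx (k + 1) m → ℂ)) (ψ p) := by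
          apply DifferentiableAt.fun_sum
          exact fun j _ => (hlamsp j).smul_const _
        rw [hZ0]
        rw [fderiv_fun_add hd1 hd2, h1, h2]
      rw [hcomp]
      rw [ContinuousLinearMap.comp_apply, h3]
      rw [← hwsucc i]
      simp only [ContinuousLinearMap.add_apply, ContinuousLinearMap.smul_apply,
        ContinuousLinearMap.smulRight_apply, ContinuousLinearMap.sum_apply, hB]
      abel
    have hterm0 : Ac (k + 1) m (Function.update w 0 (W' 0))
        = lam (ψ p) * Ac (k + 1) m (Function.update w 0 (B (w 0))) := by
      have h1 : W' 0 = lam (ψ p) • B (X (ψ p)) := by rw [hW']; simp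
      rw [h1, ← hw0v]
      exact (Ac (k + 1) m).map_update_smul w 0 (lam (ψ p)) (B (w 0))
    have htermsucc : ∀ i : Fin k, Ac (k + 1) m (Function.update w i.succ (W' i.succ))
        = lam (ψ p) * Ac (k + 1) m (Function.update w i.succ (B (w i.succ))) := by
      intro i
      have h1 : W' i.succ = fderiv ℂ ZΨ p (v i) := by rw [hW']; simp
      rw [h1, hZΨfd i]
      rw [(Ac (k + 1) m).map_update_add, (Ac (k + 1) m).map_update_add]
      have hz1 : Ac (k + 1) m (Function.update w i.succ
          (fderiv ℂ lam (ψ p) (w i.succ) • X (ψ p))) = 0 := by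
        rw [(Ac (k + 1) m).map_update_smul, ← hw0v, Ac_update_repeat w i, smul_zero]
      have hz2 : Ac (k + 1) m (Function.update w i.succ
          (∑ j : Fin m, fderiv ℂ (lams j) (ψ p) (w i.succ) •
            (Pi.single (Sum.inr j) 1 : PIdx (k + 1) m → ℂ))) = 0 := by
        rw [show Ac (k + 1) m (Function.update w i.succ
            (∑ j : Fin m, fderiv ℂ (lams j) (ψ p) (w i.succ) •
              (Pi.single (Sum.inr j) 1 : PIdx (k + 1) m → ℂ)))
          = (Ac (k + 1) m).toMultilinearMap (Function.update w i.succ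
            (∑ j : Fin m, fderiv ℂ (lams j) (ψ p) (w i.succ) •
              (Pi.single (Sum.inr j) 1 : PIdx (k + 1) m → ℂ))) from rfl]
        rw [MultilinearMap.map_update_sum]
        refine Finset.sum_eq_zero fun j _ => ?_
        rw [MultilinearMap.map_update_smul]
        have := Ac_update_single_inr w i.succ j
        rw [show (Ac (k + 1) m).toMultilinearMap (Function.update w i.succ
            (Pi.single (Sum.inr j) 1 : PIdx (k + 1) m → ℂ))
          = Ac (k + 1) m (Function.update w i.succ
            (Pi.single (Sum.inr j) 1 : PIdx (k + 1) m → ℂ)) from rfl, this, smul_zero]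
      rw [hz1, hz2, (Ac (k + 1) m).map_update_smul, zero_add, add_zero]
      rfl
    have hsum : ∑ j : Fin (k + 1), Ac (k + 1) m (Function.update w j (W' j))
        = lam (ψ p) * ∑ t : Fin (k + 1), Ac (k + 1) m (Function.update w t (B (w t))) := by
      rw [Fin.sum_univ_succ, Fin.sum_univ_succ, hterm0, mul_add, Finset.mul_sum]
      congr 1
      exact Finset.sum_congr rfl fun i _ => htermsucc i
    -- the determinant/trace identity
    have hkey : ∑ t : Fin (k + 1), Ac (k + 1) m (Function.update w t (B (w t)))
        = divergence X (ψ p) * Ac (k + 1) m w := by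
      set N : Matrix (Fin (k + 1)) (Fin (k + 1)) ℂ :=
        Matrix.of fun a b' => B (Pi.single (Sum.inl b') 1) (Sum.inl a) with hN
      have hBrow : ∀ u : PIdx (k + 1) m → ℂ, (B u) ∘ Sum.inl = N.mulVec (u ∘ Sum.inl) := by
        intro u
        funext a
        have hu : u = ∑ c : PIdx (k + 1) m, u c • (Pi.single c 1 : PIdx (k + 1) m → ℂ) := by
          ext c'
          rw [Finset.sum_apply]
          simp [Pi.single_apply]
        have h1 : B u = ∑ c : PIdx (k + 1) m, u c • B (Pi.single c 1) := by
          conv_lhs => rw [hu]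
          rw [map_sum]
          exact Finset.sum_congr rfl fun c _ => by rw [_root_.map_smul]
        calc (B u ∘ Sum.inl) a
            = (∑ c : PIdx (k + 1) m, u c • B (Pi.single c 1)) (Sum.inl a) := by
              rw [Function.comp_apply, h1]
          _ = ∑ c : PIdx (k + 1) m, u c * B (Pi.single c 1) (Sum.inl a) := by
              rw [Finset.sum_apply]; rfl
          _ = ∑ b' : Fin (k + 1), u (Sum.inl b') * B (Pi.single (Sum.inl b') 1) (Sum.inl a) := by
              rw [Fintype.sum_sum_type]
              have hz : ∀ j : Fin m, u (Sum.inr j) * B (Pi.single (Sum.inr j) 1) (Sum.inl a)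
                  = 0 := by
                intro j
                rw [hB, hXdir (ψ p) hψppoly j]
                simp
              rw [Finset.sum_congr rfl fun j _ => hz j, Finset.sum_const_zero, add_zero]
          _ = N.mulVec (u ∘ Sum.inl) a := by
              rw [Matrix.mulVec, dotProduct]
              exact Finset.sum_congr rfl fun b' _ => by rw [hN]; exact mul_comm _ _
      have hAcBu : ∀ t : Fin (k + 1), Ac (k + 1) m (Function.update w t (B (w t)))
          = Matrix.detRowAlternating
              (Function.update (fun l => w l ∘ Sum.inl) t (N.mulVec (w t ∘ Sum.inl))) := by
        intro t
        rw [show Ac (k + 1) m (Function.update w t (B (w t)))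
            = Matrix.detRowAlternating
              (fun l => Function.update w t (B (w t)) l ∘ Sum.inl) from rfl]
        congr 1
        funext l
        by_cases hl : l = t
        · subst hl
          rw [Function.update_self, Function.update_self, hBrow]
        · rw [Function.update_of_ne hl, Function.update_of_ne hl]
      have htr : N.trace = divergence X (ψ p) := by
        rw [divergence, Fintype.sum_sum_type]
        have h2 : ∀ j : Fin m, fderiv ℂ X (ψ p) (Pi.single (Sum.inr j) 1) (Sum.inr j)
            = (0 : ℂ) := by
          intro j
          rw [hXdir (ψ p) hψppoly j]
          rfl
        rw [Finset.sum_congr rfl fun j _ => h2 j, Finset.sum_const_zero, add_zero]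
        rw [Matrix.trace]
        exact Finset.sum_congr rfl fun a _ => by rw [Matrix.diag_apply, hN, hB]; rfl
      simp_rw [hAcBu]
      rw [det_sum_update (fun l => w l ∘ Sum.inl) N, htr]
      rfl
    have hAcw : Ac (k + 1) m w = θ p * c0 := by
      calc Ac (k + 1) m w
          = intProd X (volX (k + 1) m) (ψ p) (fun i => fderiv ℂ ψ p (v i)) := rfl
        _ = θ p * c0 := hpull p hp v
    calc fderiv ℂ θ p e * c0
        = ∑ j : Fin (k + 1), Ac (k + 1) m (Function.update w j (W' j)) := hkeyEq.symm
      _ = lam (ψ p) * (divergence X (ψ p) * Ac (k + 1) m w) := by rw [hsum, hkey]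
      _ = lam (ψ p) * divergence X (ψ p) * (θ p * c0) := by rw [hAcw]; ring


  exact ⟨main, fun p hp hdiv v => by rw [main p hp v, hdiv]; ring⟩
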